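/- arXiv:1306.2410 — 2 statements merged into one kernel-verified Lean document; each statement's English description precedes it below -/
import Mathlib

section
/- Let X = (X₁,…,X_m) be a centered N-dimensional Gaussian random vector with block covariance matrix T = (T_{ij}) and let P = diag(p₁T₁₁,…,p_mT_mm) for real exponents p₁,…,p_m. For every α = (α₁,…,α_m) ∈ ℝ^N with αᵢ ∈ ℝ^{nᵢ}, taking fᵢ(xᵢ) = exp(⟨αᵢ, xᵢ⟩) one has E[∏_{i=1}^m fᵢ(Xᵢ)] = exp(½⟨Tα, α⟩) and ∏_{i=1}^m (E[fᵢ(Xᵢ)^{pᵢ}])^{1/pᵢ} = exp(½⟨Pα, α⟩). Consequently: if E[∏_{i=1}^m fᵢ(Xᵢ)] ≤ ∏_{i=1}^m (E[fᵢ(Xᵢ)^{pᵢ}])^{1/pᵢ} holds for all nonnegative measurable fᵢ, then T ≤ P; if the reverse inequality holds for all nonnegative measurable fᵢ, then T ≥ P; and if α ∈ Ker(T − P), then equality holds in both inequalities for the exponential functions fᵢ(xᵢ) = exp(⟨αᵢ, xᵢ⟩). -/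
open MeasureTheory ProbabilityTheory Matrix
open scoped ENNReal

/-- The standard Gaussian measure on `ι → ℝ`. -/
noncomputable def stdGaussian (ι : Type*) [Fintype ι] : Measure (ι → ℝ) :=
  Measure.pi fun _ => gaussianReal 0 1

/-- The `p`-mean `(∫ f^p)^(1/p)` of a nonnegative function, read as
`exp (∫ log f)` when `p = 0`. -/
noncomputable def pMeanE {α : Type*} [MeasurableSpace α] (μ : Measure α)
    (f : α → ℝ≥0∞) (p : ℝ) : ℝ≥0∞ :=
  if p = 0 then ENNReal.ofReal (Real.exp (∫ x, Real.log (f x).toReal ∂μ))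
  else (∫⁻ x, f x ^ p ∂μ) ^ (1 / p)

lemma measurable_dotProd {ι : Type*} [Fintype ι] (β : ι → ℝ) :
    Measurable fun x : ι → ℝ => β ⬝ᵥ x := by
  simp only [dotProduct]
  exact Finset.measurable_sum _ fun i _ => (measurable_pi_apply i).const_mul _

lemma measurable_mulVecFn {ι : Type*} [Fintype ι] (S : Matrix ι ι ℝ) :
    Measurable fun x : ι → ℝ => S.mulVec x :=
  measurable_pi_lambda _ fun a => measurable_dotProd (fun b => S a b)

lemma lintegral_pi_prod {ι : Type*} [Fintype ι] [DecidableEq ι]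
    (μ : ι → Measure ℝ) [∀ i, SigmaFinite (μ i)]
    (g : ι → ℝ → ℝ≥0∞) (hg : ∀ i, Measurable (g i)) :
    ∫⁻ x, ∏ i, g i (x i) ∂Measure.pi μ = ∏ i, ∫⁻ y, g i y ∂μ i := by
  have hf : Measurable fun x : ι → ℝ => ∏ i, g i (x i) :=
    Finset.measurable_prod _ fun i _ => (hg i).comp (measurable_pi_apply i)
  have key : ∀ s : Finset ι, ∀ x : ι → ℝ,
      (∫⋯∫⁻_s, (fun x => ∏ i, g i (x i)) ∂μ) x
        = (∏ i ∈ s, ∫⁻ y, g i y ∂μ i) * ∏ i ∈ sᶜ, g i (x i) := by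
    intro s
    induction s using Finset.induction_on with
    | empty => intro x; simp
    | @insert i s hi ih =>
      intro x
      rw [MeasureTheory.lmarginal_insert _ hf hi]
      have h1 : ∀ y : ℝ, (∫⋯∫⁻_s, (fun x => ∏ i, g i (x i)) ∂μ) (Function.update x i y)
          = ((∏ j ∈ s, ∫⁻ y, g j y ∂μ j) * ∏ j ∈ sᶜ.erase i, g j (x j)) * g i y := by
        intro y
        rw [ih]
        have h2 : ∏ j ∈ sᶜ, g j (Function.update x i y j)
            = g i y * ∏ j ∈ sᶜ.erase i, g j (x j) := by
          rw [← Finset.mul_prod_erase _ _ (Finset.mem_compl.2 hi)]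
          congr 1
          · rw [Function.update_self]
          · exact Finset.prod_congr rfl fun j hj =>
              congrArg _ (Function.update_of_ne (Finset.ne_of_mem_erase hj) _ _)
        rw [h2]; ring
      simp_rw [h1]
      rw [lintegral_const_mul _ (hg i), Finset.prod_insert hi, Finset.compl_insert]
      ring
  rw [MeasureTheory.lintegral_eq_lmarginal_univ (fun _ => (0:ℝ)), key]
  simp

lemma lintegral_exp_mul_stdGaussianReal (c : ℝ) :
    ∫⁻ y, ENNReal.ofReal (Real.exp (c * y)) ∂gaussianReal 0 1
      = ENNReal.ofReal (Real.exp (c ^ 2 / 2)) := by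
  rw [gaussianReal_of_var_ne_zero 0 one_ne_zero,
    lintegral_withDensity_eq_lintegral_mul _ (measurable_gaussianPDF 0 1) (by fun_prop)]
  have h : ∀ y, (gaussianPDF 0 1 * fun y => ENNReal.ofReal (Real.exp (c * y))) y
      = ENNReal.ofReal (Real.exp (c ^ 2 / 2)) * gaussianPDF c 1 y := by
    intro y
    simp only [Pi.mul_apply, gaussianPDF]
    rw [← ENNReal.ofReal_mul (gaussianPDFReal_nonneg _ _ _),
      ← ENNReal.ofReal_mul (Real.exp_nonneg _)]
    congr 1
    simp only [gaussianPDFReal, NNReal.coe_one, mul_one, sub_zero]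
    rw [mul_assoc, ← Real.exp_add, mul_comm (Real.exp (c ^ 2 / 2)), mul_assoc, ← Real.exp_add]
    congr 2
    ring
  simp_rw [h]
  rw [lintegral_const_mul _ (measurable_gaussianPDF c 1),
    lintegral_gaussianPDF_eq_one c one_ne_zero, mul_one]

lemma lintegral_exp_dot {ι : Type*} [Fintype ι] (β : ι → ℝ) :
    ∫⁻ x, ENNReal.ofReal (Real.exp (β ⬝ᵥ x)) ∂stdGaussian ι
      = ENNReal.ofReal (Real.exp ((1/2) * (β ⬝ᵥ β))) := by
  classical
  have h1 : ∀ x : ι → ℝ, ENNReal.ofReal (Real.exp (β ⬝ᵥ x))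
      = ∏ i, ENNReal.ofReal (Real.exp (β i * x i)) := by
    intro x
    rw [dotProduct, Real.exp_sum,
      ENNReal.ofReal_prod_of_nonneg (fun i _ => (Real.exp_pos _).le)]
  simp_rw [h1]
  rw [_root_.stdGaussian, lintegral_pi_prod (fun _ => gaussianReal 0 1)
    (fun i y => ENNReal.ofReal (Real.exp (β i * y))) (fun i => by fun_prop)]
  simp_rw [lintegral_exp_mul_stdGaussianReal]
  rw [← ENNReal.ofReal_prod_of_nonneg (fun i _ => (Real.exp_pos _).le), ← Real.exp_sum]
  congr 1
  congr 1
  rw [dotProduct, Finset.mul_sum]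
  exact Finset.sum_congr rfl fun i _ => by ring

lemma stdGaussian_map_neg {ι : Type*} [Fintype ι] :
    Measure.map (fun x : ι → ℝ => -x) (stdGaussian ι) = stdGaussian ι := by
  have hg : Measure.map (fun y : ℝ => -y) (gaussianReal 0 1) = gaussianReal 0 1 := by
    have h := gaussianReal_map_const_mul (μ := 0) (v := 1) (-1)
    have h2 : (⟨(-1:ℝ)^2, sq_nonneg _⟩ : NNReal) * 1 = 1 := by ext; norm_num
    simp only [neg_one_mul, mul_zero, h2] at h
    convert h using 2
    ext; norm_num
  rw [_root_.stdGaussian]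
  refine (Measure.pi_eq fun s hs => ?_).symm
  rw [Measure.map_apply measurable_neg (MeasurableSet.univ_pi hs)]
  have hpre : (fun x : ι → ℝ => -x) ⁻¹' Set.univ.pi s
      = Set.univ.pi fun i => (fun y : ℝ => -y) ⁻¹' s i := by
    ext x; simp [Set.mem_pi]
  rw [hpre, Measure.pi_pi]
  exact Finset.prod_congr rfl fun i _ => by
    rw [← Measure.map_apply measurable_neg (hs i), hg]

lemma integral_dot_stdGaussian {ι : Type*} [Fintype ι] (β : ι → ℝ) :
    ∫ x, β ⬝ᵥ x ∂stdGaussian ι = 0 := by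
  have h : ∫ x, β ⬝ᵥ x ∂stdGaussian ι
      = ∫ x, β ⬝ᵥ x ∂(Measure.map (fun x : ι → ℝ => -x) (stdGaussian ι)) := by
    rw [stdGaussian_map_neg]
  rw [integral_map measurable_neg.aemeasurable
    (measurable_dotProd β).aestronglyMeasurable] at h
  simp only [dotProduct_neg] at h
  rw [integral_neg] at h
  linarith

/-- **Remarks 1.3 and 1.4**: exponential test functions compute to
`exp(½⟨Tα,α⟩)` and `exp(½⟨Pα,α⟩)`; hence validity of either inequality for all
nonnegative measurable functions forces the corresponding matrix inequality, and
`α ∈ Ker(T - P)` yields equality for the exponential functions. -/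
theorem stmt3
    {Ω : Type*} [MeasurableSpace Ω] (μ : Measure Ω) [IsProbabilityMeasure μ]
    (m : ℕ) (hm : 0 < m) (n : Fin m → ℕ) (hn : ∀ i, 0 < n i)
    (X : Ω → ((Σ i : Fin m, Fin (n i)) → ℝ)) (hX : Measurable X)
    (T S : Matrix (Σ i : Fin m, Fin (n i)) (Σ i : Fin m, Fin (n i)) ℝ)
    (hTS : S * Sᵀ = T)
    (hlaw : Measure.map X μ = Measure.map S.mulVec (stdGaussian (Σ i : Fin m, Fin (n i))))
    (p : Fin m → ℝ)
    (P : Matrix (Σ i : Fin m, Fin (n i)) (Σ i : Fin m, Fin (n i)) ℝ)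
    (hP : ∀ a b, P a b = if a.1 = b.1 then p a.1 * T a b else 0) :
    (∀ α : (Σ i : Fin m, Fin (n i)) → ℝ,
      ∫⁻ ω, ∏ i, ENNReal.ofReal (Real.exp (∑ j, α ⟨i, j⟩ * X ω ⟨i, j⟩)) ∂μ
        = ENNReal.ofReal (Real.exp ((1 / 2) * (T.mulVec α ⬝ᵥ α)))) ∧
    (∀ α : (Σ i : Fin m, Fin (n i)) → ℝ,
      ∏ i, pMeanE μ (fun ω => ENNReal.ofReal (Real.exp (∑ j, α ⟨i, j⟩ * X ω ⟨i, j⟩))) (p i)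
        = ENNReal.ofReal (Real.exp ((1 / 2) * (P.mulVec α ⬝ᵥ α)))) ∧
    ((∀ f : ∀ i : Fin m, (Fin (n i) → ℝ) → ℝ, (∀ i, Measurable (f i)) →
        (∀ i x, 0 ≤ f i x) →
        ∫⁻ ω, ∏ i, ENNReal.ofReal (f i (fun j => X ω ⟨i, j⟩)) ∂μ
          ≤ ∏ i, pMeanE μ (fun ω => ENNReal.ofReal (f i (fun j => X ω ⟨i, j⟩))) (p i)) →
      (P - T).PosSemidef) ∧
    ((∀ f : ∀ i : Fin m, (Fin (n i) → ℝ) → ℝ, (∀ i, Measurable (f i)) →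
        (∀ i x, 0 ≤ f i x) →
        ∏ i, pMeanE μ (fun ω => ENNReal.ofReal (f i (fun j => X ω ⟨i, j⟩))) (p i)
          ≤ ∫⁻ ω, ∏ i, ENNReal.ofReal (f i (fun j => X ω ⟨i, j⟩)) ∂μ) →
      (T - P).PosSemidef) ∧
    (∀ α : (Σ i : Fin m, Fin (n i)) → ℝ, (T - P).mulVec α = 0 →
      ∫⁻ ω, ∏ i, ENNReal.ofReal (Real.exp (∑ j, α ⟨i, j⟩ * X ω ⟨i, j⟩)) ∂μ
        = ∏ i, pMeanE μ (fun ω => ENNReal.ofReal (Real.exp (∑ j, α ⟨i, j⟩ * X ω ⟨i, j⟩))) (p i)) := by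
  classical
  -- rewriting dot products through S
  have hdotS : ∀ (β : (Σ i : Fin m, Fin (n i)) → ℝ) (x : (Σ i : Fin m, Fin (n i)) → ℝ), β ⬝ᵥ S.mulVec x = (Sᵀ.mulVec β) ⬝ᵥ x := by
    intro β x
    rw [Matrix.dotProduct_mulVec, ← Matrix.vecMul_transpose, Matrix.transpose_transpose]
  have hquad : ∀ β : (Σ i : Fin m, Fin (n i)) → ℝ, (Sᵀ.mulVec β) ⬝ᵥ (Sᵀ.mulVec β) = T.mulVec β ⬝ᵥ β := by
    intro β
    rw [← hTS, ← Matrix.mulVec_mulVec, dotProduct_comm (S *ᵥ (Sᵀ *ᵥ β)) β, hdotS]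
  -- the fundamental computation
  have key : ∀ β : (Σ i : Fin m, Fin (n i)) → ℝ, ∫⁻ ω, ENNReal.ofReal (Real.exp (β ⬝ᵥ X ω)) ∂μ
      = ENNReal.ofReal (Real.exp ((1 / 2) * (T.mulVec β ⬝ᵥ β))) := by
    intro β
    have hmeas : Measurable fun x : (Σ i : Fin m, Fin (n i)) → ℝ => ENNReal.ofReal (Real.exp (β ⬝ᵥ x)) :=
      ENNReal.measurable_ofReal.comp (Real.measurable_exp.comp (measurable_dotProd β))
    rw [← lintegral_map hmeas hX, hlaw, lintegral_map hmeas (measurable_mulVecFn S)]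
    simp_rw [hdotS β]
    rw [lintegral_exp_dot, hquad]
  have mean : ∀ β : (Σ i : Fin m, Fin (n i)) → ℝ, ∫ ω, β ⬝ᵥ X ω ∂μ = 0 := by
    intro β
    rw [← integral_map hX.aemeasurable (measurable_dotProd β).aestronglyMeasurable, hlaw,
      integral_map (measurable_mulVecFn S).aemeasurable
        (measurable_dotProd β).aestronglyMeasurable]
    simp_rw [hdotS β]
    exact integral_dot_stdGaussian _
  -- block decomposition
  have hblock : ∀ (α : (Σ i : Fin m, Fin (n i)) → ℝ) (i : Fin m) (x : (Σ i : Fin m, Fin (n i)) → ℝ),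
      (∑ j, α ⟨i, j⟩ * x ⟨i, j⟩) = (fun a : (Σ i : Fin m, Fin (n i)) => if a.1 = i then α a else 0) ⬝ᵥ x := by
    intro α i x
    rw [dotProduct, ← Finset.univ_sigma_univ, Finset.sum_sigma]
    simp only [ite_mul, zero_mul]
    have h1 : ∀ i' : Fin m, (∑ j, if (⟨i', j⟩ : Σ i : Fin m, Fin (n i)).1 = i then α ⟨i', j⟩ * x ⟨i', j⟩ else 0)
        = if i' = i then ∑ j, α ⟨i', j⟩ * x ⟨i', j⟩ else 0 := by
      intro i'; split <;> simp_all
    simp_rw [h1]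
    rw [Finset.sum_ite_eq' Finset.univ i fun i' => ∑ j, α ⟨i', j⟩ * x ⟨i', j⟩]
    simp
  -- statement 1
  have st1 : ∀ α : (Σ i : Fin m, Fin (n i)) → ℝ,
      ∫⁻ ω, ∏ i, ENNReal.ofReal (Real.exp (∑ j, α ⟨i, j⟩ * X ω ⟨i, j⟩)) ∂μ
        = ENNReal.ofReal (Real.exp ((1 / 2) * (T.mulVec α ⬝ᵥ α))) := by
    intro α
    have h1 : ∀ ω, ∏ i, ENNReal.ofReal (Real.exp (∑ j, α ⟨i, j⟩ * X ω ⟨i, j⟩))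
        = ENNReal.ofReal (Real.exp (α ⬝ᵥ X ω)) := by
      intro ω
      rw [← ENNReal.ofReal_prod_of_nonneg (fun i _ => (Real.exp_pos _).le), ← Real.exp_sum]
      congr 2
      rw [dotProduct, ← Finset.univ_sigma_univ, Finset.sum_sigma]
    simp_rw [h1]
    exact key α
  -- statement 2, factor by factor
  have st2i : ∀ (α : (Σ i : Fin m, Fin (n i)) → ℝ) (i : Fin m),
      pMeanE μ (fun ω => ENNReal.ofReal (Real.exp (∑ j, α ⟨i, j⟩ * X ω ⟨i, j⟩))) (p i)
        = ENNReal.ofReal (Real.exp ((1 / 2) * (p i *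
            (T.mulVec (fun a : (Σ i : Fin m, Fin (n i)) => if a.1 = i then α a else 0)
              ⬝ᵥ (fun a : (Σ i : Fin m, Fin (n i)) => if a.1 = i then α a else 0))))) := by
    intro α i
    set β : (Σ i : Fin m, Fin (n i)) → ℝ := fun a => if a.1 = i then α a else 0 with hβ
    have hb : ∀ ω, (∑ j, α ⟨i, j⟩ * X ω ⟨i, j⟩) = β ⬝ᵥ X ω := fun ω => hblock α i (X ω)
    by_cases hp : p i = 0
    · rw [pMeanE, if_pos hp, hp]
      have h2 : ∀ ω, Real.log ((ENNReal.ofReal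
            (Real.exp (∑ j, α ⟨i, j⟩ * X ω ⟨i, j⟩))).toReal) = β ⬝ᵥ X ω := by
        intro ω
        rw [hb, ENNReal.toReal_ofReal (Real.exp_pos _).le, Real.log_exp]
      simp_rw [h2]
      rw [mean β]
      norm_num
    · rw [pMeanE, if_neg hp]
      have h1 : ∀ ω, (ENNReal.ofReal (Real.exp (∑ j, α ⟨i, j⟩ * X ω ⟨i, j⟩))) ^ (p i)
          = ENNReal.ofReal (Real.exp ((p i • β) ⬝ᵥ X ω)) := by
        intro ω
        rw [hb, ENNReal.ofReal_rpow_of_pos (Real.exp_pos _), ← Real.exp_mul,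
          smul_dotProduct]
        congr 2
        simp [mul_comm]
      simp_rw [h1]
      rw [key (p i • β), ENNReal.ofReal_rpow_of_pos (Real.exp_pos _), ← Real.exp_mul]
      congr 2
      rw [Matrix.mulVec_smul, smul_dotProduct, dotProduct_smul]
      simp only [smul_eq_mul]
      field_simp
  -- the quadratic form identity for P
  have alg : ∀ α : (Σ i : Fin m, Fin (n i)) → ℝ, ∑ i, p i * (T.mulVec (fun a : (Σ i : Fin m, Fin (n i)) => if a.1 = i then α a else 0)
      ⬝ᵥ (fun a : (Σ i : Fin m, Fin (n i)) => if a.1 = i then α a else 0)) = P.mulVec α ⬝ᵥ α := by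
    intro α
    simp only [Matrix.mulVec, dotProduct]
    simp_rw [Finset.mul_sum]
    rw [Finset.sum_comm]
    refine Finset.sum_congr rfl fun a _ => ?_
    simp only [hP, mul_ite, mul_zero, ite_mul, zero_mul]
    rw [Finset.sum_ite_eq Finset.univ a.1]
    simp only [Finset.mem_univ, if_true]
    rw [← mul_assoc, Finset.mul_sum]
    congr 1
    refine Finset.sum_congr rfl fun b _ => ?_
    by_cases hab : a.1 = b.1
    · rw [if_pos hab.symm, if_pos hab]; ring
    · rw [if_neg (fun h => hab h.symm), if_neg hab, mul_zero]
  have st2 : ∀ α : (Σ i : Fin m, Fin (n i)) → ℝ,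
      ∏ i, pMeanE μ (fun ω => ENNReal.ofReal (Real.exp (∑ j, α ⟨i, j⟩ * X ω ⟨i, j⟩))) (p i)
        = ENNReal.ofReal (Real.exp ((1 / 2) * (P.mulVec α ⬝ᵥ α))) := by
    intro α
    simp_rw [st2i α]
    rw [← ENNReal.ofReal_prod_of_nonneg (fun i _ => (Real.exp_pos _).le), ← Real.exp_sum]
    congr 2
    rw [← alg α, Finset.mul_sum]
  -- symmetry facts
  have hTh : T.IsHermitian := by
    rw [← hTS, ← Matrix.conjTranspose_eq_transpose_of_trivial]
    exact Matrix.isHermitian_mul_conjTranspose_self S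
  have hTsym : ∀ a b, T a b = T b a := by
    intro a b
    conv_lhs => rw [← hTh.eq]
    simp [Matrix.conjTranspose_apply]
  have hPh : P.IsHermitian := by
    ext a b
    simp only [Matrix.conjTranspose_apply, hP, star_trivial]
    by_cases hab : a.1 = b.1
    · rw [if_pos hab, if_pos hab.symm, hab, hTsym]
    · rw [if_neg hab, if_neg (fun h => hab h.symm)]
  -- the comparison extraction
  have hcomp : ∀ (α : (Σ i : Fin m, Fin (n i)) → ℝ),
      (∫⁻ ω, ∏ i, ENNReal.ofReal (Real.exp (∑ j, α ⟨i, j⟩ * X ω ⟨i, j⟩)) ∂μ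
        ≤ ∏ i, pMeanE μ (fun ω => ENNReal.ofReal (Real.exp (∑ j, α ⟨i, j⟩ * X ω ⟨i, j⟩))) (p i))
      → T.mulVec α ⬝ᵥ α ≤ P.mulVec α ⬝ᵥ α := by
    intro α h
    rw [st1 α, st2 α] at h
    have h2 := (ENNReal.ofReal_le_ofReal_iff (Real.exp_pos _).le).1 h
    have h3 := Real.exp_le_exp.1 h2
    linarith
  have hcomp' : ∀ (α : (Σ i : Fin m, Fin (n i)) → ℝ),
      (∏ i, pMeanE μ (fun ω => ENNReal.ofReal (Real.exp (∑ j, α ⟨i, j⟩ * X ω ⟨i, j⟩))) (p i)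
        ≤ ∫⁻ ω, ∏ i, ENNReal.ofReal (Real.exp (∑ j, α ⟨i, j⟩ * X ω ⟨i, j⟩)) ∂μ)
      → P.mulVec α ⬝ᵥ α ≤ T.mulVec α ⬝ᵥ α := by
    intro α h
    rw [st1 α, st2 α] at h
    have h2 := (ENNReal.ofReal_le_ofReal_iff (Real.exp_pos _).le).1 h
    have h3 := Real.exp_le_exp.1 h2
    linarith
  refine ⟨st1, st2, ?_, ?_, ?_⟩
  · intro hyp
    refine Matrix.PosSemidef.of_dotProduct_mulVec_nonneg (hPh.sub hTh) fun v => ?_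
    have hf : ∀ i : Fin m, Measurable fun y : Fin (n i) → ℝ =>
        Real.exp (∑ j, v ⟨i, j⟩ * y j) := fun i =>
      Real.measurable_exp.comp (Finset.measurable_sum _ fun j _ =>
        (measurable_pi_apply j).const_mul _)
    have h := hyp (fun i y => Real.exp (∑ j, v ⟨i, j⟩ * y j)) hf
      (fun i y => (Real.exp_pos _).le)
    simp only [] at h
    have h2 := hcomp v h
    have e1 : star v ⬝ᵥ ((P - T) *ᵥ v) = v ⬝ᵥ ((P - T) *ᵥ v) := by congr 1
    rw [e1, Matrix.sub_mulVec, dotProduct_sub]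
    have e2 : v ⬝ᵥ (P *ᵥ v) = P *ᵥ v ⬝ᵥ v := dotProduct_comm _ _
    have e3 : v ⬝ᵥ (T *ᵥ v) = T *ᵥ v ⬝ᵥ v := dotProduct_comm _ _
    linarith [h2, e2, e3]
  · intro hyp
    refine Matrix.PosSemidef.of_dotProduct_mulVec_nonneg (hTh.sub hPh) fun v => ?_
    have hf : ∀ i : Fin m, Measurable fun y : Fin (n i) → ℝ =>
        Real.exp (∑ j, v ⟨i, j⟩ * y j) := fun i =>
      Real.measurable_exp.comp (Finset.measurable_sum _ fun j _ =>
        (measurable_pi_apply j).const_mul _)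
    have h := hyp (fun i y => Real.exp (∑ j, v ⟨i, j⟩ * y j)) hf
      (fun i y => (Real.exp_pos _).le)
    simp only [] at h
    have h2 := hcomp' v h
    have e1 : star v ⬝ᵥ ((T - P) *ᵥ v) = v ⬝ᵥ ((T - P) *ᵥ v) := by congr 1
    rw [e1, Matrix.sub_mulVec, dotProduct_sub]
    have e2 : v ⬝ᵥ (P *ᵥ v) = P *ᵥ v ⬝ᵥ v := dotProduct_comm _ _
    have e3 : v ⬝ᵥ (T *ᵥ v) = T *ᵥ v ⬝ᵥ v := dotProduct_comm _ _
    linarith [h2, e2, e3]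
  · intro α hker
    have hTP : T.mulVec α = P.mulVec α := by
      have h := hker
      rw [Matrix.sub_mulVec] at h
      exact sub_eq_zero.1 h
    rw [st1 α, st2 α, hTP]
end

section
/- (Prékopa–Leindler inequality.) Let f, g, h be nonnegative measurable functions on ℝⁿ and λ ∈ [0,1] such that h(λx + (1−λ)y) ≥ f(x)^λ g(y)^{1−λ} for all x, y ∈ ℝⁿ. Then ∫_{ℝⁿ} h(x) dx ≥ (∫_{ℝⁿ} f(x) dx)^λ (∫_{ℝⁿ} g(x) dx)^{1−λ}. -/
open MeasureTheory
open scoped ENNReal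

open Set Pointwise Filter
open scoped NNReal Topology

lemma bm_translate (c : ℝ) (K : Set ℝ) : volume ((fun z => z - c) ⁻¹' K) = volume K := by
  simpa [sub_eq_add_neg] using measure_preimage_add_right (volume : Measure ℝ) (-c) K

lemma bm_compact {K L : Set ℝ} (hK : IsCompact K) (hL : IsCompact L)
    (hK0 : K.Nonempty) (hL0 : L.Nonempty) :
    volume K + volume L ≤ volume (K + L) := by
  obtain ⟨a, ha, haub⟩ := hK.exists_isGreatest hK0
  obtain ⟨b, hb, hblb⟩ := hL.exists_isLeast hL0
  set S : Set ℝ := (fun z => z - b) ⁻¹' K with hS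
  set T : Set ℝ := (fun z => z - a) ⁻¹' L with hT
  have hSsub : S ⊆ K + L := fun z hz => ⟨z - b, hz, b, hb, by ring⟩
  have hTsub : T ⊆ K + L := fun z hz => ⟨a, ha, z - a, hz, by ring⟩
  have hTmble : MeasurableSet T := (measurable_id.sub_const a) hL.measurableSet
  have hint : volume (S ∩ T) = 0 := by
    have hsub : S ∩ T ⊆ {a + b} := by
      rintro z ⟨hzS, hzT⟩
      have h1 : z - b ≤ a := haub hzS
      have h2 : b ≤ z - a := hblb hzT
      simp only [mem_singleton_iff]; linarith
    exact measure_mono_null hsub (measure_singleton _)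
  calc volume K + volume L = volume S + volume T := by rw [bm_translate, bm_translate]
    _ = volume (S ∪ T) + volume (S ∩ T) := (measure_union_add_inter S hTmble).symm
    _ = volume (S ∪ T) := by rw [hint, add_zero]
    _ ≤ volume (K + L) := measure_mono (union_subset hSsub hTsub)

lemma bm_subset_add_left {A B : Set ℝ} (hB0 : B.Nonempty) : volume A ≤ volume (A + B) := by
  obtain ⟨b, hb⟩ := hB0
  have : (fun z => z - b) ⁻¹' A ⊆ A + B := fun z hz => ⟨z - b, hz, b, hb, by ring⟩
  calc volume A = volume ((fun z => z - b) ⁻¹' A) := (bm_translate b A).symm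
    _ ≤ volume (A + B) := measure_mono this

set_option maxHeartbeats 1000000 in
lemma bm_meas {A B : Set ℝ} (hA : MeasurableSet A) (hB : MeasurableSet B)
    (hA0 : A.Nonempty) (hB0 : B.Nonempty) :
    volume A + volume B ≤ volume (A + B) := by
  rcases eq_or_lt_of_le (zero_le : (0:ℝ≥0∞) ≤ volume A) with hA' | hA'
  · rw [← hA', zero_add]
    calc volume B ≤ volume (B + A) := bm_subset_add_left hA0
      _ = volume (A + B) := by rw [add_comm]
  rcases eq_or_lt_of_le (zero_le : (0:ℝ≥0∞) ≤ volume B) with hB' | hB'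
  · rw [← hB', add_zero]; exact bm_subset_add_left hB0
  have key : ∀ r, r < volume A → ∀ s, s < volume B → r + s ≤ volume (A + B) := by
    intro r hr s hs
    obtain ⟨K, hKA, hKc, hK⟩ := hA.exists_lt_isCompact hr
    obtain ⟨L, hLB, hLc, hL⟩ := hB.exists_lt_isCompact hs
    have hKne : K.Nonempty := nonempty_of_measure_ne_zero (by exact (pos_of_gt hK).ne')
    have hLne : L.Nonempty := nonempty_of_measure_ne_zero (by exact (pos_of_gt hL).ne')
    calc r + s ≤ volume K + volume L := add_le_add hK.le hL.le
      _ ≤ volume (K + L) := bm_compact hKc hLc hKne hLne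
      _ ≤ volume (A + B) := measure_mono (Set.add_subset_add hKA hLB)
  have hsup : ∀ (a : ℝ≥0∞), (⨆ r, ⨆ (_ : r < a), r) = a := by
    intro a
    refine le_antisymm (iSup₂_le fun r hr => hr.le) ?_
    by_contra hcon
    push_neg at hcon
    obtain ⟨c, hc1, hc2⟩ := exists_between hcon
    exact absurd (le_iSup₂ (f := fun r (_ : r < a) => r) c hc2) (not_le.2 hc1)
  calc volume A + volume B
      = (⨆ r, ⨆ (_ : r < volume A), r) + (⨆ s, ⨆ (_ : s < volume B), s) := by
        rw [hsup, hsup]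
    _ ≤ volume (A + B) := ENNReal.biSup_add_biSup_le' (p := fun r => r < volume A)
        (q := fun s => s < volume B) ⟨0, hA'⟩ ⟨0, hB'⟩ key


lemma meas_level (f : ℝ → ℝ) : Measurable fun t : ℝ => volume {a : ℝ | t < f a} := by
  have : Antitone fun t : ℝ => volume {a : ℝ | t < f a} :=
    fun s t hst => measure_mono fun a ha => lt_of_le_of_lt hst ha
  exact this.measurable

lemma oneDim_core (f g h : ℝ → ℝ) (hf : Measurable f) (hg : Measurable g) (hh : Measurable h)
    (hf0 : ∀ x, 0 ≤ f x) (hg0 : ∀ x, 0 ≤ g x) (hh0 : ∀ x, 0 ≤ h x)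
    {l : ℝ} (hl0 : 0 < l) (hl1 : l < 1)
    (hf1 : ∀ x, f x ≤ 1) (hg1 : ∀ x, g x ≤ 1)
    (hfs : ∀ t, t < 1 → ∃ x, t < f x) (hgs : ∀ t, t < 1 → ∃ x, t < g x)
    (hcond : ∀ x y, f x ^ l * g y ^ (1 - l) ≤ h (l * x + (1 - l) * y)) :
    ENNReal.ofReal l * (∫⁻ x, ENNReal.ofReal (f x))
      + ENNReal.ofReal (1 - l) * (∫⁻ x, ENNReal.ofReal (g x))
      ≤ ∫⁻ x, ENNReal.ofReal (h x) := by
  have h1l : (0:ℝ) < 1 - l := by linarith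
  -- layer cake representations
  rw [lintegral_eq_lintegral_meas_lt volume (Filter.Eventually.of_forall hf0) hf.aemeasurable,
    lintegral_eq_lintegral_meas_lt volume (Filter.Eventually.of_forall hg0) hg.aemeasurable,
    lintegral_eq_lintegral_meas_lt volume (Filter.Eventually.of_forall hh0) hh.aemeasurable]
  -- cut the f and g integrals at 1
  have hcut : ∀ (f : ℝ → ℝ), (∀ x, f x ≤ 1) →
      (∫⁻ t in Ioi (0:ℝ), volume {a | t < f a}) = ∫⁻ t in Ioo (0:ℝ) 1, volume {a | t < f a} := by
    intro f hf1
    rw [← Ioo_union_Ici_eq_Ioi (zero_lt_one : (0:ℝ) < 1),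
      lintegral_union measurableSet_Ici (Disjoint.mono_left Ioo_subset_Iio_self (Iio_disjoint_Ici le_rfl))]
    have : ∫⁻ t in Ici (1:ℝ), volume {a | t < f a} = 0 := by
      rw [setLIntegral_congr_fun measurableSet_Ici
          (fun t ht => ?_), lintegral_zero]
      have : {a : ℝ | t < f a} = ∅ := by
        ext a; simp only [mem_setOf_eq, mem_empty_iff_false, iff_false, not_lt]
        exact (hf1 a).trans ht
      rw [this, measure_empty]
    rw [this, add_zero]
  rw [hcut f hf1, hcut g hg1]
  -- pointwise level set inequality on Ioo 0 1
  have key : ∀ t ∈ Ioo (0:ℝ) 1,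
      ENNReal.ofReal l * volume {a | t < f a} + ENNReal.ofReal (1-l) * volume {a | t < g a}
        ≤ volume {a | t < h a} := by
    rintro t ⟨ht0, ht1⟩
    set A := {a : ℝ | t < f a} with hA
    set B := {a : ℝ | t < g a} with hB
    have hAm : MeasurableSet A := measurableSet_lt measurable_const hf
    have hBm : MeasurableSet B := measurableSet_lt measurable_const hg
    have hAne : A.Nonempty := hfs t ht1
    have hBne : B.Nonempty := hgs t ht1
    have hsub : l • A + (1-l) • B ⊆ {a : ℝ | t < h a} := by
      rintro z ⟨x', ⟨x, hx, rfl⟩, y', ⟨y, hy, rfl⟩, rfl⟩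
      have he : l + (1 - l) = 1 := by ring
      have ht' : t = t ^ l * t ^ (1 - l) := by
        rw [← Real.rpow_add ht0, he, Real.rpow_one]
      have hlt : t ^ l * t ^ (1 - l) < f x ^ l * g y ^ (1 - l) :=
        mul_lt_mul'' (Real.rpow_lt_rpow ht0.le hx hl0)
          (Real.rpow_lt_rpow ht0.le hy h1l)
          (Real.rpow_nonneg ht0.le l) (Real.rpow_nonneg ht0.le (1-l))
      have := lt_of_lt_of_le hlt (hcond x y)
      simpa only [mem_setOf_eq, smul_eq_mul] using lt_of_lt_of_le (ht' ▸ hlt) (hcond x y)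
    calc ENNReal.ofReal l * volume A + ENNReal.ofReal (1-l) * volume B
        = volume (l • A) + volume ((1-l) • B) := by
          rw [Measure.addHaar_smul_of_nonneg volume hl0.le A,
            Measure.addHaar_smul_of_nonneg volume h1l.le B]
          simp
      _ ≤ volume (l • A + (1-l) • B) :=
          bm_meas (hAm.const_smul₀ l) (hBm.const_smul₀ (1-l))
            (hAne.smul_set) (hBne.smul_set)
      _ ≤ volume {a : ℝ | t < h a} := measure_mono hsub
  -- integrate
  calc (ENNReal.ofReal l * ∫⁻ t in Ioo (0:ℝ) 1, volume {a | t < f a})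
        + ENNReal.ofReal (1-l) * ∫⁻ t in Ioo (0:ℝ) 1, volume {a | t < g a}
      = ∫⁻ t in Ioo (0:ℝ) 1, (ENNReal.ofReal l * volume {a | t < f a}
          + ENNReal.ofReal (1-l) * volume {a | t < g a}) := by
        rw [lintegral_add_left ((meas_level f).const_mul _),
          lintegral_const_mul _ (meas_level f), lintegral_const_mul _ (meas_level g)]
    _ ≤ ∫⁻ t in Ioo (0:ℝ) 1, volume {a | t < h a} :=
        setLIntegral_mono (meas_level h) key
    _ ≤ ∫⁻ t in Ioi (0:ℝ), volume {a | t < h a} :=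
        lintegral_mono' (Measure.restrict_mono Ioo_subset_Ioi_self le_rfl) le_rfl

lemma amgm_ennreal (A B : ℝ≥0∞) {l : ℝ} (hl0 : 0 < l) (hl1 : l < 1) :
    A ^ l * B ^ (1 - l) ≤ ENNReal.ofReal l * A + ENNReal.ofReal (1 - l) * B := by
  have h1l : (0:ℝ) < 1 - l := by linarith
  rcases eq_or_ne A ∞ with rfl | hA
  · rcases eq_or_ne B 0 with rfl | hB
    · simp [ENNReal.zero_rpow_of_pos h1l]
    · have : ENNReal.ofReal l * ∞ = ∞ := by
        rw [ENNReal.mul_top]; simp [ENNReal.ofReal_eq_zero, not_le, hl0]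
      simp [this]
  rcases eq_or_ne B ∞ with rfl | hB
  · rcases eq_or_ne A 0 with rfl | hA0
    · simp [ENNReal.zero_rpow_of_pos hl0]
    · have : ENNReal.ofReal (1 - l) * ∞ = ∞ := by
        rw [ENNReal.mul_top]; · simp [ENNReal.ofReal_eq_zero, not_le]; linarith
      simp [this]
  -- finite case
  lift A to ℝ≥0 using hA
  lift B to ℝ≥0 using hB
  have key := NNReal.geom_mean_le_arith_mean2_weighted (w₁ := l.toNNReal)
    (w₂ := (1-l).toNNReal) (p₁ := A) (p₂ := B) ?_
  · have hc1 : ((l.toNNReal : ℝ)) = l := Real.coe_toNNReal _ hl0.le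
    have hc2 : (((1-l).toNNReal : ℝ)) = 1 - l := Real.coe_toNNReal _ h1l.le
    calc (A:ℝ≥0∞) ^ l * (B:ℝ≥0∞) ^ (1-l)
        = ((A ^ l * B ^ (1-l) : ℝ≥0) : ℝ≥0∞) := by
          rw [ENNReal.coe_mul, ← ENNReal.coe_rpow_of_nonneg _ hl0.le,
            ← ENNReal.coe_rpow_of_nonneg _ h1l.le]
      _ ≤ ((l.toNNReal * A + (1-l).toNNReal * B : ℝ≥0) : ℝ≥0∞) := by
          rw [ENNReal.coe_le_coe]
          simpa [hc1, hc2] using key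
      _ = ENNReal.ofReal l * A + ENNReal.ofReal (1 - l) * B := by
          rw [ENNReal.coe_add, ENNReal.coe_mul, ENNReal.coe_mul,
            ENNReal.ofReal, ENNReal.ofReal]
  · rw [← NNReal.coe_inj]
    push_cast
    rw [Real.coe_toNNReal _ hl0.le, Real.coe_toNNReal _ h1l.le]
    ring

/-- truncation: `∫⁻ ofReal (min f m)` tends to `∫⁻ ofReal f`. -/
lemma lintegral_min_tendsto (f : ℝ → ℝ) (hf : Measurable f) (hf0 : ∀ x, 0 ≤ f x) :
    Tendsto (fun m : ℕ => ∫⁻ x, ENNReal.ofReal (min (f x) m)) atTop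
      (𝓝 (∫⁻ x, ENNReal.ofReal (f x))) := by
  have hmono : Monotone fun m : ℕ => ∫⁻ x, ENNReal.ofReal (min (f x) m) := by
    intro i j hij
    exact lintegral_mono fun x => ENNReal.ofReal_le_ofReal
      (min_le_min le_rfl (by exact_mod_cast hij))
  have hsup : (⨆ m : ℕ, ∫⁻ x, ENNReal.ofReal (min (f x) m)) = ∫⁻ x, ENNReal.ofReal (f x) := by
    rw [← lintegral_iSup (fun m => (hf.min measurable_const).ennreal_ofReal)
      (fun i j hij x => ENNReal.ofReal_le_ofReal (min_le_min le_rfl (by exact_mod_cast hij)))]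
    refine lintegral_congr fun x => ?_
    refine le_antisymm (iSup_le fun m => ENNReal.ofReal_le_ofReal (min_le_left _ _)) ?_
    refine le_iSup_of_le ⌈f x⌉₊ ?_
    rw [min_eq_left (Nat.le_ceil _)]
  rw [← hsup]
  exact tendsto_atTop_iSup hmono

lemma oneDim_real (f g h : ℝ → ℝ) (hf : Measurable f) (hg : Measurable g) (hh : Measurable h)
    (hf0 : ∀ x, 0 ≤ f x) (hg0 : ∀ x, 0 ≤ g x) (hh0 : ∀ x, 0 ≤ h x)
    {l : ℝ} (hl0 : 0 < l) (hl1 : l < 1)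
    (hcond : ∀ x y, f x ^ l * g y ^ (1 - l) ≤ h (l * x + (1 - l) * y)) :
    (∫⁻ x, ENNReal.ofReal (f x)) ^ l * (∫⁻ x, ENNReal.ofReal (g x)) ^ (1 - l)
      ≤ ∫⁻ x, ENNReal.ofReal (h x) := by
  have h1l : (0:ℝ) < 1 - l := by linarith
  rcases eq_or_ne (∫⁻ x, ENNReal.ofReal (f x)) 0 with hIf | hIf
  · rw [hIf, ENNReal.zero_rpow_of_pos hl0, zero_mul]; exact zero_le
  rcases eq_or_ne (∫⁻ x, ENNReal.ofReal (g x)) 0 with hIg | hIg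
  · rw [hIg, ENNReal.zero_rpow_of_pos h1l, mul_zero]; exact zero_le
  -- positivity points
  have hex : ∀ (f : ℝ → ℝ), Measurable f → (∀ x, 0 ≤ f x) →
      (∫⁻ x, ENNReal.ofReal (f x)) ≠ 0 → ∃ x, 0 < f x := by
    intro f hf hf0 hI
    by_contra hcon
    push_neg at hcon
    refine hI ?_
    have : ∀ x, ENNReal.ofReal (f x) = 0 := fun x =>
      ENNReal.ofReal_eq_zero.2 (hcon x)
    simp [this]
  obtain ⟨x0, hx0⟩ := hex f hf hf0 hIf
  obtain ⟨y0, hy0⟩ := hex g hg hg0 hIg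
  -- main bound for large truncation level
  have key : ∀ m : ℕ, f x0 ≤ m → g y0 ≤ m →
      (∫⁻ x, ENNReal.ofReal (min (f x) m)) ^ l * (∫⁻ x, ENNReal.ofReal (min (g x) m)) ^ (1 - l)
        ≤ ∫⁻ x, ENNReal.ofReal (h x) := by
    intro m hmf hmg
    set Mf := ⨆ x, min (f x) (m:ℝ) with hMf
    set Mg := ⨆ x, min (g x) (m:ℝ) with hMg
    have hbf : BddAbove (range fun x => min (f x) (m:ℝ)) :=
      ⟨m, by rintro - ⟨x, rfl⟩; exact min_le_right _ _⟩
    have hbg : BddAbove (range fun x => min (g x) (m:ℝ)) :=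
      ⟨m, by rintro - ⟨x, rfl⟩; exact min_le_right _ _⟩
    have hMf0 : 0 < Mf := lt_of_lt_of_le (by simpa [min_eq_left hmf] using hx0)
      (le_ciSup hbf x0)
    have hMg0 : 0 < Mg := lt_of_lt_of_le (by simpa [min_eq_left hmg] using hy0)
      (le_ciSup hbg y0)
    set c := Mf ^ l * Mg ^ (1 - l) with hc
    have hc0 : 0 < c := mul_pos (Real.rpow_pos_of_pos hMf0 _) (Real.rpow_pos_of_pos hMg0 _)
    set F := fun x => min (f x) (m:ℝ) / Mf with hF
    set G := fun x => min (g x) (m:ℝ) / Mg with hG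
    set H := fun x => h x / c with hH
    have hFm : Measurable F := (hf.min measurable_const).div_const _
    have hGm : Measurable G := (hg.min measurable_const).div_const _
    have hHm : Measurable H := hh.div_const _
    have hF0 : ∀ x, 0 ≤ F x := fun x => div_nonneg (le_min (hf0 x) (Nat.cast_nonneg m)) hMf0.le
    have hG0 : ∀ x, 0 ≤ G x := fun x => div_nonneg (le_min (hg0 x) (Nat.cast_nonneg m)) hMg0.le
    have hH0 : ∀ x, 0 ≤ H x := fun x => div_nonneg (hh0 x) hc0.le
    have hF1 : ∀ x, F x ≤ 1 := fun x => (div_le_one hMf0).2 (le_ciSup hbf x)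
    have hG1 : ∀ x, G x ≤ 1 := fun x => (div_le_one hMg0).2 (le_ciSup hbg x)
    have hFs : ∀ t, t < 1 → ∃ x, t < F x := by
      intro t ht
      have : t * Mf < Mf := by nlinarith
      obtain ⟨x, hx⟩ := exists_lt_of_lt_ciSup (show t * Mf < ⨆ x, min (f x) (m:ℝ) from this)
      exact ⟨x, (lt_div_iff₀ hMf0).2 hx⟩
    have hGs : ∀ t, t < 1 → ∃ x, t < G x := by
      intro t ht
      have : t * Mg < Mg := by nlinarith
      obtain ⟨x, hx⟩ := exists_lt_of_lt_ciSup (show t * Mg < ⨆ x, min (g x) (m:ℝ) from this)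
      exact ⟨x, (lt_div_iff₀ hMg0).2 hx⟩
    have hcond' : ∀ x y, F x ^ l * G y ^ (1 - l) ≤ H (l * x + (1 - l) * y) := by
      intro x y
      have e1 : F x ^ l * G y ^ (1 - l)
          = (min (f x) (m:ℝ)) ^ l * (min (g y) (m:ℝ)) ^ (1 - l) / c := by
        rw [hF, hG, Real.div_rpow (le_min (hf0 x) (Nat.cast_nonneg m)) hMf0.le,
          Real.div_rpow (le_min (hg0 y) (Nat.cast_nonneg m)) hMg0.le,
          div_mul_div_comm, hc]
      rw [e1, hH, div_le_div_iff_of_pos_right hc0]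
      refine le_trans ?_ (hcond x y)
      exact mul_le_mul
        (Real.rpow_le_rpow (le_min (hf0 x) (Nat.cast_nonneg m)) (min_le_left _ _) hl0.le)
        (Real.rpow_le_rpow (le_min (hg0 y) (Nat.cast_nonneg m)) (min_le_left _ _) h1l.le)
        (Real.rpow_nonneg (le_min (hg0 y) (Nat.cast_nonneg m)) _)
        (Real.rpow_nonneg (hf0 x) _)
    have := oneDim_core F G H hFm hGm hHm hF0 hG0 hH0 hl0 hl1 hF1 hG1 hFs hGs hcond'
    have hAM := le_trans (amgm_ennreal (∫⁻ x, ENNReal.ofReal (F x))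
      (∫⁻ x, ENNReal.ofReal (G x)) hl0 hl1) this
    -- unnormalize
    have unF : ∫⁻ x, ENNReal.ofReal (min (f x) (m:ℝ))
        = ENNReal.ofReal Mf * ∫⁻ x, ENNReal.ofReal (F x) := by
      rw [← lintegral_const_mul _ (hFm.ennreal_ofReal)]
      refine lintegral_congr fun x => ?_
      rw [← ENNReal.ofReal_mul hMf0.le, hF, mul_div_cancel₀ _ hMf0.ne']
    have unG : ∫⁻ x, ENNReal.ofReal (min (g x) (m:ℝ))
        = ENNReal.ofReal Mg * ∫⁻ x, ENNReal.ofReal (G x) := by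
      rw [← lintegral_const_mul _ (hGm.ennreal_ofReal)]
      refine lintegral_congr fun x => ?_
      rw [← ENNReal.ofReal_mul hMg0.le, hG, mul_div_cancel₀ _ hMg0.ne']
    have unH : ∫⁻ x, ENNReal.ofReal (h x)
        = ENNReal.ofReal c * ∫⁻ x, ENNReal.ofReal (H x) := by
      rw [← lintegral_const_mul _ (hHm.ennreal_ofReal)]
      refine lintegral_congr fun x => ?_
      rw [← ENNReal.ofReal_mul hc0.le, hH, mul_div_cancel₀ _ hc0.ne']
    rw [unF, unG, unH,
      ENNReal.mul_rpow_of_nonneg _ _ hl0.le, ENNReal.mul_rpow_of_nonneg _ _ h1l.le]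
    calc ENNReal.ofReal Mf ^ l * (∫⁻ x, ENNReal.ofReal (F x)) ^ l
          * (ENNReal.ofReal Mg ^ (1-l) * (∫⁻ x, ENNReal.ofReal (G x)) ^ (1-l))
        = (ENNReal.ofReal Mf ^ l * ENNReal.ofReal Mg ^ (1-l))
          * ((∫⁻ x, ENNReal.ofReal (F x)) ^ l * (∫⁻ x, ENNReal.ofReal (G x)) ^ (1-l)) := by
          ring
      _ ≤ (ENNReal.ofReal Mf ^ l * ENNReal.ofReal Mg ^ (1-l)) * ∫⁻ x, ENNReal.ofReal (H x) := by
          exact mul_le_mul_right hAM _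
      _ = ENNReal.ofReal c * ∫⁻ x, ENNReal.ofReal (H x) := by
          rw [ENNReal.ofReal_rpow_of_pos hMf0, ENNReal.ofReal_rpow_of_pos hMg0,
            ← ENNReal.ofReal_mul (Real.rpow_nonneg hMf0.le _), hc]
  -- pass to the limit
  have hTf := lintegral_min_tendsto f hf hf0
  have hTg := lintegral_min_tendsto g hg hg0
  have hT : Tendsto (fun m : ℕ =>
      (∫⁻ x, ENNReal.ofReal (min (f x) m)) ^ l * (∫⁻ x, ENNReal.ofReal (min (g x) m)) ^ (1-l))
      atTop (𝓝 ((∫⁻ x, ENNReal.ofReal (f x)) ^ l * (∫⁻ x, ENNReal.ofReal (g x)) ^ (1-l))) := by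
    refine ENNReal.Tendsto.mul ((ENNReal.continuous_rpow_const.tendsto _).comp hTf) ?_
      ((ENNReal.continuous_rpow_const.tendsto _).comp hTg) ?_
    · exact Or.inl (by simp [ENNReal.rpow_eq_zero_iff, hIf, hl0, hl0.not_gt])
    · exact Or.inl (by simp [ENNReal.rpow_eq_zero_iff, hIg, h1l, h1l.not_gt])
  refine le_of_tendsto hT ?_
  filter_upwards [eventually_ge_atTop ⌈f x0⌉₊, eventually_ge_atTop ⌈g y0⌉₊] with m hm1 hm2
  exact key m (le_trans (Nat.le_ceil _) (by exact_mod_cast hm1))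
    (le_trans (Nat.le_ceil _) (by exact_mod_cast hm2))

lemma lintegral_min_top_tendsto {α : Type*} [MeasurableSpace α] (μ : Measure α)
    (φ : α → ℝ≥0∞) (hφ : Measurable φ) :
    Tendsto (fun m : ℕ => ∫⁻ x, min (φ x) m ∂μ) atTop (𝓝 (∫⁻ x, φ x ∂μ)) := by
  have hmono : ∀ {i j : ℕ}, i ≤ j → ∀ x, min (φ x) i ≤ min (φ x) j := by
    intro i j hij x
    exact min_le_min le_rfl (by exact_mod_cast Nat.cast_le.2 hij)
  have hsup : (⨆ m : ℕ, ∫⁻ x, min (φ x) m ∂μ) = ∫⁻ x, φ x ∂μ := by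
    rw [← lintegral_iSup (fun m => hφ.min measurable_const) (fun i j hij x => hmono hij x)]
    refine lintegral_congr fun x => ?_
    refine le_antisymm (iSup_le fun m => min_le_left _ _) ?_
    rcases eq_or_ne (φ x) ∞ with hx | hx
    · calc φ x = ⨆ m : ℕ, (m : ℝ≥0∞) := by rw [ENNReal.iSup_natCast, hx]
        _ ≤ ⨆ m : ℕ, min (φ x) m := by
            refine iSup_mono fun m => ?_
            rw [hx]; simp
    · refine le_iSup_of_le ⌈(φ x).toReal⌉₊ ?_
      rw [min_eq_left]
      calc φ x = ENNReal.ofReal (φ x).toReal := (ENNReal.ofReal_toReal hx).symm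
        _ ≤ ENNReal.ofReal (⌈(φ x).toReal⌉₊ : ℝ) := ENNReal.ofReal_le_ofReal (Nat.le_ceil _)
        _ = (⌈(φ x).toReal⌉₊ : ℝ≥0∞) := ENNReal.ofReal_natCast _
  rw [← hsup]
  exact tendsto_atTop_iSup fun i j hij => lintegral_mono fun x => hmono hij x

lemma oneDim_ennreal (φf φg φh : ℝ → ℝ≥0∞)
    (hf : Measurable φf) (hg : Measurable φg) (hh : Measurable φh)
    {l : ℝ} (hl0 : 0 < l) (hl1 : l < 1)
    (hcond : ∀ x y, φf x ^ l * φg y ^ (1 - l) ≤ φh (l * x + (1 - l) * y)) :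
    (∫⁻ x, φf x) ^ l * (∫⁻ x, φg x) ^ (1 - l) ≤ ∫⁻ x, φh x := by
  have h1l : (0:ℝ) < 1 - l := by linarith
  have key : ∀ m : ℕ,
      (∫⁻ x, min (φf x) m) ^ l * (∫⁻ x, min (φg x) m) ^ (1 - l) ≤ ∫⁻ x, φh x := by
    intro m
    set fm := fun x => (min (φf x) m).toReal with hfm
    set gm := fun x => (min (φg x) m).toReal with hgm
    set hm := fun x => (min (φh x) m).toReal with hhm
    have hfin : ∀ (ψ : ℝ → ℝ≥0∞) x, min (ψ x) m ≠ ∞ :=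
      fun ψ x => (lt_of_le_of_lt (min_le_right _ _) (ENNReal.natCast_lt_top m)).ne
    have hofr : ∀ (ψ : ℝ → ℝ≥0∞) x, ENNReal.ofReal ((min (ψ x) m).toReal) = min (ψ x) m :=
      fun ψ x => ENNReal.ofReal_toReal (hfin ψ x)
    have hcond' : ∀ x y, fm x ^ l * gm y ^ (1 - l) ≤ hm (l * x + (1 - l) * y) := by
      intro x y
      have hEN : min (φf x) m ^ l * min (φg y) m ^ (1 - l) ≤ min (φh (l*x+(1-l)*y)) m := by
        refine le_min ?_ ?_
        · exact le_trans (mul_le_mul' (ENNReal.rpow_le_rpow (min_le_left _ _) hl0.le)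
            (ENNReal.rpow_le_rpow (min_le_left _ _) h1l.le)) (hcond x y)
        · calc min (φf x) m ^ l * min (φg y) m ^ (1 - l)
              ≤ (m:ℝ≥0∞) ^ l * (m:ℝ≥0∞) ^ (1 - l) :=
                mul_le_mul' (ENNReal.rpow_le_rpow (min_le_right _ _) hl0.le)
                  (ENNReal.rpow_le_rpow (min_le_right _ _) h1l.le)
            _ = (m:ℝ≥0∞) := by
                rw [← ENNReal.rpow_add_of_nonneg _ _ hl0.le h1l.le]
                norm_num
        
      have := ENNReal.toReal_mono (hfin φh _) hEN
      rwa [ENNReal.toReal_mul, ← ENNReal.toReal_rpow, ← ENNReal.toReal_rpow] at this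
    have hmble : ∀ (ψ : ℝ → ℝ≥0∞), Measurable ψ → Measurable fun x => (min (ψ x) m).toReal :=
      fun ψ hψ => (hψ.min measurable_const).ennreal_toReal
    have := oneDim_real fm gm hm (hmble _ hf) (hmble _ hg) (hmble _ hh)
      (fun x => ENNReal.toReal_nonneg) (fun x => ENNReal.toReal_nonneg)
      (fun x => ENNReal.toReal_nonneg) hl0 hl1 hcond'
    simp only [hfm, hgm, hhm, hofr] at this
    exact le_trans this (lintegral_mono fun x => min_le_left _ _)
  have hTf := lintegral_min_top_tendsto volume φf hf
  have hTg := lintegral_min_top_tendsto volume φg hg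
  rcases eq_or_ne (∫⁻ x, φf x) 0 with hIf | hIf
  · rw [hIf, ENNReal.zero_rpow_of_pos hl0, zero_mul]; exact zero_le
  rcases eq_or_ne (∫⁻ x, φg x) 0 with hIg | hIg
  · rw [hIg, ENNReal.zero_rpow_of_pos h1l, mul_zero]; exact zero_le
  have hT : Tendsto (fun m : ℕ =>
      (∫⁻ x, min (φf x) m) ^ l * (∫⁻ x, min (φg x) m) ^ (1-l))
      atTop (𝓝 ((∫⁻ x, φf x) ^ l * (∫⁻ x, φg x) ^ (1-l))) := by
    refine ENNReal.Tendsto.mul ((ENNReal.continuous_rpow_const.tendsto _).comp hTf) ?_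
      ((ENNReal.continuous_rpow_const.tendsto _).comp hTg) ?_
    · exact Or.inl (by simp [ENNReal.rpow_eq_zero_iff, hIf, hl0, hl0.not_gt])
    · exact Or.inl (by simp [ENNReal.rpow_eq_zero_iff, hIg, h1l, h1l.not_gt])
  exact le_of_tendsto hT (Eventually.of_forall key)

lemma insertNth_zero_linear {n : ℕ} (a b : ℝ) (y1 y2 : ℝ) (z1 z2 : Fin n → ℝ) :
    (Fin.insertNth (α := fun _ : Fin (n+1) => ℝ) 0 (a * y1 + b * y2) (a • z1 + b • z2))
      = a • Fin.insertNth (α := fun _ : Fin (n+1) => ℝ) 0 y1 z1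
        + b • Fin.insertNth (α := fun _ : Fin (n+1) => ℝ) 0 y2 z2 := by
  ext j
  induction j using Fin.cases with
  | zero => simp
  | succ k =>
    have key : ∀ (y : ℝ) (z : Fin n → ℝ),
        Fin.insertNth (α := fun _ : Fin (n+1) => ℝ) 0 y z k.succ = z k := by
      intro y z
      have := Fin.insertNth_apply_succAbove (i := (0 : Fin (n+1)))
        (α := fun _ : Fin (n+1) => ℝ) (x := y) (p := z) k
      simpa [Fin.succAbove_zero] using this
    simp only [Pi.add_apply, Pi.smul_apply, key, smul_eq_mul]

lemma pl_ennreal : ∀ (n : ℕ) (φf φg φh : (Fin n → ℝ) → ℝ≥0∞),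
    Measurable φf → Measurable φg → Measurable φh →
    ∀ {l : ℝ}, 0 < l → l < 1 →
    (∀ x y, φf x ^ l * φg y ^ (1 - l) ≤ φh (l • x + (1 - l) • y)) →
    (∫⁻ x, φf x) ^ l * (∫⁻ x, φg x) ^ (1 - l) ≤ ∫⁻ x, φh x := by
  intro n
  induction n with
  | zero =>
    intro φf φg φh hf hg hh l hl0 hl1 hcond
    have huniv : (volume : Measure (Fin 0 → ℝ)) univ = 1 := by
      simp [volume_pi]
    set y : Fin 0 → ℝ := default with hy
    have hconst : ∀ (φ : (Fin 0 → ℝ) → ℝ≥0∞), (∫⁻ x, φ x) = φ y := by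
      intro φ
      have hφ : φ = fun _ => φ y := funext fun x => congrArg φ (Subsingleton.elim x y)
      rw [hφ, lintegral_const, huniv, mul_one]
    rw [hconst φf, hconst φg, hconst φh]
    refine le_trans (hcond y y) (le_of_eq (congrArg φh (Subsingleton.elim _ _)))
  | succ n ih =>
    intro φf φg φh hf hg hh l hl0 hl1 hcond
    set e := MeasurableEquiv.piFinSuccAbove (fun _ : Fin (n+1) => ℝ) 0 with he
    have hmp : MeasurePreserving e volume volume :=
      volume_preserving_piFinSuccAbove (fun _ : Fin (n+1) => ℝ) 0
    have hsymm : ∀ (y : ℝ) (z : Fin n → ℝ),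
        e.symm (y, z) = Fin.insertNth (α := fun _ : Fin (n+1) => ℝ) 0 y z := fun y z => rfl
    have hmm : ∀ (φ : (Fin (n+1) → ℝ) → ℝ≥0∞), Measurable φ →
        Measurable fun y : ℝ => ∫⁻ z : Fin n → ℝ, φ (e.symm (y, z)) :=
      fun φ hφ => (hφ.comp e.symm.measurable).lintegral_prod_right'
    have hint : ∀ (φ : (Fin (n+1) → ℝ) → ℝ≥0∞), Measurable φ →
        (∫⁻ x, φ x) = ∫⁻ y : ℝ, ∫⁻ z : Fin n → ℝ, φ (e.symm (y, z)) := by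
      intro φ hφ
      have h1 : ∫⁻ p : ℝ × (Fin n → ℝ), φ (e.symm p) = ∫⁻ x, φ x :=
        (hmp.symm e).lintegral_comp hφ
      have hq : Measurable fun p : ℝ × (Fin n → ℝ) => φ (e.symm p) :=
        hφ.comp e.symm.measurable
      rw [← h1, Measure.volume_eq_prod, lintegral_prod _ hq.aemeasurable]
    have hcondM : ∀ y1 y2 : ℝ,
        (∫⁻ z : Fin n → ℝ, φf (e.symm (y1, z))) ^ l
          * (∫⁻ z : Fin n → ℝ, φg (e.symm (y2, z))) ^ (1 - l)
        ≤ ∫⁻ z : Fin n → ℝ, φh (e.symm (l * y1 + (1 - l) * y2, z)) := by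
      intro y1 y2
      refine ih (fun z => φf (e.symm (y1, z))) (fun z => φg (e.symm (y2, z)))
        (fun z => φh (e.symm (l * y1 + (1 - l) * y2, z)))
        ((hf.comp e.symm.measurable).comp measurable_prodMk_left)
        ((hg.comp e.symm.measurable).comp measurable_prodMk_left)
        ((hh.comp e.symm.measurable).comp measurable_prodMk_left) hl0 hl1 ?_
      intro z1 z2
      have hlin : e.symm (l * y1 + (1 - l) * y2, l • z1 + (1 - l) • z2)
          = l • e.symm (y1, z1) + (1 - l) • e.symm (y2, z2) := by
        rw [hsymm, hsymm, hsymm]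
        exact insertNth_zero_linear l (1-l) y1 y2 z1 z2
      exact le_trans (hcond _ _) (le_of_eq (congrArg φh hlin.symm))
    have h1d := oneDim_ennreal _ _ _ (hmm _ hf) (hmm _ hg) (hmm _ hh) hl0 hl1 hcondM
    rw [hint φf hf, hint φg hg, hint φh hh]
    exact h1d

/-- **Prékopa-Leindler inequality**: if `h(λx + (1-λ)y) ≥ f(x)^λ g(y)^{1-λ}`
for all `x, y`, then `∫ h ≥ (∫ f)^λ (∫ g)^{1-λ}`. -/
theorem stmt16
    (n : ℕ) (f g h : (Fin n → ℝ) → ℝ)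
    (hf : Measurable f) (hg : Measurable g) (hh : Measurable h)
    (hf0 : ∀ x, 0 ≤ f x) (hg0 : ∀ x, 0 ≤ g x) (hh0 : ∀ x, 0 ≤ h x)
    (l : ℝ) (hl : l ∈ Set.Icc (0 : ℝ) 1)
    (hcond : ∀ x y, f x ^ l * g y ^ (1 - l) ≤ h (l • x + (1 - l) • y)) :
    (∫⁻ x, ENNReal.ofReal (f x)) ^ l * (∫⁻ x, ENNReal.ofReal (g x)) ^ (1 - l)
      ≤ ∫⁻ x, ENNReal.ofReal (h x) := by
  obtain ⟨hl0, hl1⟩ := hl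
  rcases eq_or_lt_of_le hl0 with heq | hl0'
  · -- l = 0
    subst heq
    rw [ENNReal.rpow_zero, one_mul, sub_zero, ENNReal.rpow_one]
    refine lintegral_mono fun y => ENNReal.ofReal_le_ofReal ?_
    have := hcond default y
    simpa [Real.rpow_zero, Real.rpow_one] using this
  rcases eq_or_lt_of_le hl1 with heq | hl1'
  · -- l = 1
    subst heq
    rw [sub_self, ENNReal.rpow_zero, mul_one, ENNReal.rpow_one]
    refine lintegral_mono fun x => ENNReal.ofReal_le_ofReal ?_
    have := hcond x default
    simpa [Real.rpow_zero, Real.rpow_one] using this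
  · refine pl_ennreal n (fun x => ENNReal.ofReal (f x)) (fun x => ENNReal.ofReal (g x))
      (fun x => ENNReal.ofReal (h x)) hf.ennreal_ofReal hg.ennreal_ofReal hh.ennreal_ofReal
      hl0' hl1' ?_
    intro x y
    rw [ENNReal.ofReal_rpow_of_nonneg (hf0 x) hl0'.le,
      ENNReal.ofReal_rpow_of_nonneg (hg0 y) (by linarith : (0:ℝ) ≤ 1 - l),
      ← ENNReal.ofReal_mul (Real.rpow_nonneg (hf0 x) _)]
    exact ENNReal.ofReal_le_ofReal (hcond x y)
end
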